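/- Let A be an N×N Hermitian matrix with eigenvalues 1 ≥ λ⁽⁰⁾ ≥ ⋯ ≥ λ⁽ᴺ⁻¹⁾ ≥ 0 and orthonormal eigenvectors v₀,…,v_{N−1}. Fix ε ∈ (0,1/2), let r = #{ℓ : ε < λ⁽ℓ⁾ < 1 − ε}, and choose K with λ⁽ᴷ⁻¹⁾ > ε and λ⁽ᴷ⁾ < 1 − ε. Let A_K† = V_[K] Λ_[K]⁻¹ V_[K]* be the rank-K truncated pseudoinverse. Then there exist N×r matrices U₃, U₄ and an N×N matrix E with ‖E‖ ≤ 3ε such that A_K† = A + U₃U₄* + E. -/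

import Mathlib

open Matrix
open scoped Matrix.Norms.L2Operator

noncomputable def opNorm {𝕜 : Type*} [RCLike 𝕜] {m n : ℕ} (M : Matrix (Fin m) (Fin n) 𝕜) : ℝ :=
  ‖LinearMap.toContinuousLinearMap (Matrix.toEuclideanLin M)‖

lemma diag_norm_le {N : ℕ} (d : Fin N → ℂ) (c : ℝ) (hc : 0 ≤ c) (h : ∀ i, ‖d i‖ ≤ c) :
    ‖(Matrix.diagonal d : Matrix (Fin N) (Fin N) ℂ)‖ ≤ c := by
  rw [Matrix.l2_opNorm_def]
  apply ContinuousLinearMap.opNorm_le_bound _ hc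
  intro x
  simp only [LinearEquiv.trans_apply, LinearMap.coe_toContinuousLinearMap']
  rw [Matrix.toEuclideanLin_apply]
  rw [EuclideanSpace.norm_eq, EuclideanSpace.norm_eq]
  rw [← Real.sqrt_sq hc, ← Real.sqrt_mul (by positivity)]
  apply Real.sqrt_le_sqrt
  rw [Finset.mul_sum]
  apply Finset.sum_le_sum
  intro i _
  have : ‖(WithLp.toLp 2 (Matrix.diagonal d *ᵥ x.ofLp)) i‖ = ‖d i * x i‖ := by
    simp [Matrix.mulVec_diagonal]
  rw [this, norm_mul, mul_pow]
  gcongr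
  exact h i

lemma norm_unitary_le {N : ℕ} (V : Matrix (Fin N) (Fin N) ℂ)
    (hV : V ∈ Matrix.unitaryGroup (Fin N) ℂ) : ‖V‖ ≤ 1 := by
  have h1 : Vᴴ * V = 1 := hV.1
  have h2 : ‖Vᴴ * V‖ = ‖V‖ * ‖V‖ := Matrix.l2_opNorm_conjTranspose_mul_self V
  have h3 : ‖(1 : Matrix (Fin N) (Fin N) ℂ)‖ ≤ 1 := by
    rw [← Matrix.diagonal_one]
    exact diag_norm_le _ 1 zero_le_one (by simp)
  rw [h1, ] at h2
  nlinarith [norm_nonneg V]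

lemma sum_castLE {N K : ℕ} (hK : K ≤ N) (F : Fin N → ℂ)
    (h : ∀ l : Fin N, ¬((l : ℕ) < K) → F l = 0) :
    ∑ k : Fin K, F (Fin.castLE hK k) = ∑ l : Fin N, F l := by
  rw [show ∑ k : Fin K, F (Fin.castLE hK k)
      = ∑ l ∈ Finset.univ.map (Fin.castLEEmb hK), F l by rw [Finset.sum_map]; rfl]
  apply Finset.sum_subset (Finset.subset_univ _)
  intro l _ hl
  apply h
  intro hlt
  exact hl (Finset.mem_map.mpr ⟨⟨l, hlt⟩, Finset.mem_univ _, by simp [Fin.castLEEmb]⟩)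

lemma sum_finset {N : ℕ} (S : Finset (Fin N)) {r : ℕ} (hr : S.card = r) (F : Fin N → ℂ)
    (h : ∀ l ∉ S, F l = 0) :
    ∑ k : Fin r, F ((S.orderIsoOfFin hr k : Fin N)) = ∑ l : Fin N, F l := by
  rw [show ∑ k : Fin r, F ((S.orderIsoOfFin hr k : Fin N)) = ∑ s : S, F (s : Fin N) from
    Fintype.sum_equiv (S.orderIsoOfFin hr).toEquiv _ _ (fun k => rfl)]
  rw [Finset.sum_coe_sort S F]
  exact Finset.sum_subset (Finset.subset_univ _) (fun l _ hl => h l hl)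

lemma triple_apply {m n : Type*} [Fintype n] [DecidableEq n]
    (V W : Matrix m n ℂ) (w : n → ℂ) (i j : m) :
    (V * Matrix.diagonal w * Wᴴ) i j = ∑ l, V i l * w l * star (W j l) := by
  rw [Matrix.mul_apply]
  apply Finset.sum_congr rfl
  intro l _
  rw [Matrix.mul_diagonal, Matrix.conjTranspose_apply]

theorem stmt3 {N K : ℕ} (hK : K ≤ N)
    (A : Matrix (Fin N) (Fin N) ℂ) (hA : A.IsHermitian)
    (μ : Fin N → ℝ) (hmono : Antitone μ) (hμ : ∀ i, 0 ≤ μ i ∧ μ i ≤ 1)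
    (V : Matrix (Fin N) (Fin N) ℂ) (hV : V ∈ Matrix.unitaryGroup (Fin N) ℂ)
    (hdiag : A = V * Matrix.diagonal (fun i => (μ i : ℂ)) * Vᴴ)
    (ε : ℝ) (hε : 0 < ε) (hε2 : ε < 1/2)
    (hK1 : ∀ i : Fin N, (i : ℕ) = K - 1 → 0 < K → ε < μ i)
    (hK2 : ∀ i : Fin N, (i : ℕ) = K → μ i < 1 - ε)
    (r : ℕ) (hr : r = (Finset.univ.filter fun ℓ : Fin N => ε < μ ℓ ∧ μ ℓ < 1 - ε).card) :
    ∃ (U₃ U₄ : Matrix (Fin N) (Fin r) ℂ) (E : Matrix (Fin N) (Fin N) ℂ),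
      opNorm E ≤ 3 * ε ∧
      (V.submatrix id (Fin.castLE hK))
          * Matrix.diagonal (fun k : Fin K => (((μ (Fin.castLE hK k))⁻¹ : ℝ) : ℂ))
          * (V.submatrix id (Fin.castLE hK))ᴴ
        = A + U₃ * U₄ᴴ + E := by
  classical
  set S : Finset (Fin N) := Finset.univ.filter fun ℓ : Fin N => ε < μ ℓ ∧ μ ℓ < 1 - ε with hS
  set g0 : Fin N → ℂ := fun l => ((if (l : ℕ) < K then (μ l)⁻¹ else 0 : ℝ) : ℂ) with hg0
  set d : Fin N → ℂ := fun l => g0 l - (μ l : ℂ) with hd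
  set dU : Fin N → ℂ := fun l => if l ∈ S then d l else 0 with hdU
  set dE : Fin N → ℂ := fun l => if l ∈ S then 0 else d l with hdE
  set e : Fin r → Fin N := fun k => (S.orderIsoOfFin hr.symm k : Fin N) with he
  -- eigenvalue estimates
  have key : ∀ l : Fin N, ‖dE l‖ ≤ 3 * ε := by
    intro l
    by_cases hlS : l ∈ S
    · simp [hdE, hlS]; positivity
    · have hnot : ¬(ε < μ l ∧ μ l < 1 - ε) := by
        simpa [hS] using hlS
      by_cases hlK : (l : ℕ) < K
      · -- l < K : μ l ≥ 1 - ε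
        have hKpos : 0 < K := by omega
        have hK1N : K - 1 < N := by omega
        have hle : l ≤ ⟨K - 1, hK1N⟩ := by
          change (l : ℕ) ≤ K - 1; omega
        have hεμ : ε < μ l := lt_of_lt_of_le (hK1 ⟨K - 1, hK1N⟩ rfl (by omega)) (hmono hle)
        have hge : 1 - ε ≤ μ l := by
          by_contra hcon
          exact hnot ⟨hεμ, lt_of_not_ge hcon⟩
        have hpos : 0 < μ l := by linarith
        have h1 : μ l ≤ 1 := (hμ l).2
        have hinv : μ l * (μ l)⁻¹ = 1 := mul_inv_cancel₀ (ne_of_gt hpos)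
        have hbound : (μ l)⁻¹ - μ l ≤ 3 * ε := by nlinarith
        have hnn : μ l ≤ (μ l)⁻¹ := by nlinarith
        have hEq : dE l = ((((μ l)⁻¹ - μ l : ℝ)) : ℂ) := by
          simp only [hdE, if_neg hlS, hd, hg0, if_pos hlK]
          push_cast
          ring
        rw [hEq, Complex.norm_real, Real.norm_eq_abs, abs_of_nonneg (by linarith)]
        exact hbound
      · -- l ≥ K : μ l ≤ ε
        have hKN : K < N := lt_of_le_of_lt (le_of_not_gt hlK) l.isLt
        have hle : (⟨K, hKN⟩ : Fin N) ≤ l := by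
          change K ≤ (l : ℕ); omega
        have hlt : μ l < 1 - ε := lt_of_le_of_lt (hmono hle) (hK2 ⟨K, hKN⟩ rfl)
        have hμε : μ l ≤ ε := by
          by_contra hcon
          exact hnot ⟨lt_of_not_ge hcon, hlt⟩
        have hEq : dE l = (((- μ l : ℝ)) : ℂ) := by
          simp only [hdE, if_neg hlS, hd, hg0, if_neg hlK]
          push_cast
          ring
        rw [hEq, Complex.norm_real, Real.norm_eq_abs, abs_neg, abs_of_nonneg (hμ l).1]
        linarith
  refine ⟨(V * Matrix.diagonal dU).submatrix id e, V.submatrix id e,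
    V * Matrix.diagonal dE * Vᴴ, ?_, ?_⟩
  · -- norm bound
    have h1 : opNorm (V * Matrix.diagonal dE * Vᴴ) = ‖V * Matrix.diagonal dE * Vᴴ‖ := rfl
    rw [h1]
    have hVn : ‖V‖ ≤ 1 := norm_unitary_le V hV
    have hVHn : ‖Vᴴ‖ ≤ 1 := by rw [Matrix.l2_opNorm_conjTranspose]; exact hVn
    have hDn : ‖(Matrix.diagonal dE : Matrix (Fin N) (Fin N) ℂ)‖ ≤ 3 * ε :=
      diag_norm_le dE (3 * ε) (by positivity) key
    have n1 : ‖V * Matrix.diagonal dE‖ ≤ ‖V‖ * ‖(Matrix.diagonal dE : Matrix (Fin N) (Fin N) ℂ)‖ :=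
      Matrix.l2_opNorm_mul _ _
    have n2 : ‖V * Matrix.diagonal dE * Vᴴ‖ ≤ ‖V * Matrix.diagonal dE‖ * ‖Vᴴ‖ :=
      Matrix.l2_opNorm_mul _ _
    have p1 : (0:ℝ) ≤ ‖V * Matrix.diagonal dE‖ := norm_nonneg _
    have p2 : (0:ℝ) ≤ ‖Vᴴ‖ := norm_nonneg _
    have p3 : (0:ℝ) ≤ ‖(Matrix.diagonal dE : Matrix (Fin N) (Fin N) ℂ)‖ := norm_nonneg _
    have p4 : (0:ℝ) ≤ ‖V‖ := norm_nonneg _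
    nlinarith
  · -- the matrix identity
    ext i j
    have hstar : ∀ (l : Fin N), Vᴴ l j = star (V j l) := fun l => rfl
    have hLHS : ((V.submatrix id (Fin.castLE hK))
          * Matrix.diagonal (fun k : Fin K => (((μ (Fin.castLE hK k))⁻¹ : ℝ) : ℂ))
          * (V.submatrix id (Fin.castLE hK))ᴴ) i j
        = ∑ l : Fin N, V i l * g0 l * star (V j l) := by
      rw [← sum_castLE hK (fun l => V i l * g0 l * star (V j l))
        (fun l hl => by simp [hg0, hl])]
      rw [triple_apply]
      apply Finset.sum_congr rfl
      intro k _
      have hk : ((Fin.castLE hK k : Fin N) : ℕ) < K := k.isLt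
      simp [hg0, hk]
    have hA' : A i j = ∑ l : Fin N, V i l * (μ l : ℂ) * star (V j l) := by
      rw [hdiag, triple_apply]
    have hU : (((V * Matrix.diagonal dU).submatrix id e) * (V.submatrix id e)ᴴ) i j
        = ∑ l : Fin N, V i l * dU l * star (V j l) := by
      rw [← sum_finset S hr.symm (fun l => V i l * dU l * star (V j l))
        (fun l hl => by simp [hdU, hl])]
      rw [Matrix.mul_apply]
      apply Finset.sum_congr rfl
      intro k _
      rw [Matrix.submatrix_apply, Matrix.conjTranspose_apply, Matrix.submatrix_apply,
        Matrix.mul_diagonal, id_eq]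
      rfl
    have hE : (V * Matrix.diagonal dE * Vᴴ) i j
        = ∑ l : Fin N, V i l * dE l * star (V j l) := by
      rw [triple_apply]
    rw [Matrix.add_apply, Matrix.add_apply, hLHS, hA', hU, hE, ← Finset.sum_add_distrib,
      ← Finset.sum_add_distrib]
    apply Finset.sum_congr rfl
    intro l _
    have hsplit : dU l + dE l = d l := by
      by_cases hlS : l ∈ S <;> simp [hdU, hdE, hlS]
    have : g0 l = (μ l : ℂ) + (dU l + dE l) := by
      rw [hsplit, hd]; ring
    rw [show V i l * g0 l * star (V j l)
        = V i l * ((μ l : ℂ) + (dU l + dE l)) * star (V j l) by rw [← this]]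
    ring
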